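/- For a prime p, the residue field of the ring of integers of the p-adic complex numbers ℂ_p is algebraically closed. -/

import Mathlib

lemma IsUltra.norm_sum_le_of_le' {ι M : Type*} [SeminormedAddCommGroup M]
    [IsUltrametricDist M] {s : Finset ι} {f : ι → M} {a : ℝ} (ha : 0 ≤ a)
    (h : ∀ i ∈ s, ‖f i‖ ≤ a) : ‖∑ i ∈ s, f i‖ ≤ a := by
  classical
  induction s using Finset.induction with
  | empty => simpa using ha
  | @insert a s hx ih =>
    rw [Finset.sum_insert hx]
    exact (IsUltrametricDist.norm_add_le_max _ _).trans
      (max_le (h _ (Finset.mem_insert_self _ _)) (ih fun i hi => h i (Finset.mem_insert_of_mem hi)))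


open IsUltrametricDist in
/-- The ring of integers `{x : C | ‖x‖ ≤ 1}` of a nonarchimedean normed field `C`. -/
def ringOfIntegersOf (C : Type*) [NormedField C] [IsUltrametricDist C] : Subring C where
  carrier := {x : C | ‖x‖ ≤ 1}
  mul_mem' := fun {a b} ha hb => by
    simpa using mul_le_one₀ ha (norm_nonneg _) hb
  one_mem' := by simp
  add_mem' := fun {a b} ha hb => le_trans (norm_add_le_max a b) (max_le ha hb)
  zero_mem' := by simp
  neg_mem' := fun {a} ha => by simpa using ha

open IsUltrametricDist in
/-- The maximal ideal `{x : C | ‖x‖ < 1}` of the ring of integers. -/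
def maxIdealOf (C : Type*) [NormedField C] [IsUltrametricDist C] :
    Ideal (ringOfIntegersOf C) where
  carrier := {x : ringOfIntegersOf C | ‖(x : C)‖ < 1}
  add_mem' := fun {a b} ha hb =>
    lt_of_le_of_lt (norm_add_le_max (a : C) (b : C)) (max_lt ha hb)
  zero_mem' := by simp
  smul_mem' := fun c x hx => by
    have hc : ‖(c : C)‖ ≤ 1 := c.2
    calc ‖((c • x : ringOfIntegersOf C) : C)‖ = ‖(c : C)‖ * ‖(x : C)‖ := norm_mul _ _
    _ ≤ 1 * ‖(x : C)‖ := by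
        exact mul_le_mul_of_nonneg_right hc (norm_nonneg _)
    _ < 1 := by simpa using hx

lemma mem_maxIdealOf_iff {C : Type*} [NormedField C] [IsUltrametricDist C]
    (x : ringOfIntegersOf C) : x ∈ maxIdealOf C ↔ ‖(x : C)‖ < 1 := Iff.rfl

lemma isUnit_of_not_mem_maxIdealOf {C : Type*} [NormedField C] [IsUltrametricDist C]
    {x : ringOfIntegersOf C} (hx : x ∉ maxIdealOf C) : IsUnit x := by
  have h1 : ‖(x : C)‖ = 1 := le_antisymm x.2 (not_lt.mp hx)
  have hx0 : (x : C) ≠ 0 := by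
    intro h; rw [h] at h1; simp at h1
  have hinv : ‖(x : C)⁻¹‖ ≤ 1 := by rw [norm_inv, h1]; norm_num
  refine IsUnit.of_mul_eq_one (a := x) ⟨(x : C)⁻¹, hinv⟩ ?_
  ext
  exact mul_inv_cancel₀ hx0


/-- For a prime `p`, the residue field of the ring of integers of the
`p`-adic complex numbers `ℂ_p` is algebraically closed.  Here `ℂ_p` is characterized as
a complete algebraically closed nonarchimedean valued field `C` containing `ℚ_p`
isometrically, in which the elements algebraic over `ℚ_p` are dense. -/
theorem residueField_of_Cp_algebraically_closed
    (p : ℕ) [Fact p.Prime]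
    (C : Type*) [NormedField C] [CompleteSpace C] [IsUltrametricDist C] [IsAlgClosed C]
    [Algebra ℚ_[p] C]
    (hisom : ∀ x : ℚ_[p], ‖algebraMap ℚ_[p] C x‖ = ‖x‖)
    (hdense : Dense {x : C | IsAlgebraic ℚ_[p] x}) :
    (maxIdealOf C).IsMaximal ∧
      ∀ f : Polynomial (ringOfIntegersOf C ⧸ maxIdealOf C), 0 < f.degree →
        ∃ x, Polynomial.eval x f = 0 := by
  classical
  constructor
  · rw [Ideal.isMaximal_iff]
    constructor
    · intro h
      rw [mem_maxIdealOf_iff] at h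
      simp at h
    · intro J x _ hxm hxJ
      obtain ⟨u, rfl⟩ := isUnit_of_not_mem_maxIdealOf hxm
      simpa using J.mul_mem_left (↑u⁻¹) hxJ
  · intro f hf
    set φ := Ideal.Quotient.mk (maxIdealOf C) with hφ
    have hsurj : Function.Surjective φ := Ideal.Quotient.mk_surjective
    have hlift : f ∈ Polynomial.lifts φ := by
      rw [Polynomial.lifts_iff_coeff_lifts]
      intro n
      exact hsurj _
    obtain ⟨g, hmap, hdeg⟩ := Polynomial.mem_lifts_and_degree_eq hlift
    have hgdeg : 0 < g.degree := hdeg ▸ hf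
    have hg0 : g ≠ 0 := fun h => by simp [h] at hgdeg
    set n := g.natDegree with hn
    have hnpos : 0 < n := Polynomial.natDegree_pos_iff_degree_pos.mpr hgdeg
    -- the leading coefficient of g is not in the maximal ideal
    have hlc : g.leadingCoeff ∉ maxIdealOf C := by
      intro hmem
      have hz : φ (g.leadingCoeff) = 0 := (Ideal.Quotient.eq_zero_iff_mem).mpr hmem
      rw [Polynomial.leadingCoeff, ← Polynomial.coeff_map, hmap] at hz
      have hf0 : f ≠ 0 := fun h => by simp [h] at hf
      have hnd : g.natDegree = f.natDegree := Polynomial.natDegree_eq_of_degree_eq hdeg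
      rw [hnd] at hz
      exact Polynomial.leadingCoeff_ne_zero.mpr hf0 hz
    have hlc1 : ‖(g.leadingCoeff : C)‖ = 1 :=
      le_antisymm (g.leadingCoeff).2 (not_lt.mp hlc)
    -- map g to C
    set ι := (ringOfIntegersOf C).subtype with hι
    have hιinj : Function.Injective ι := Subtype.coe_injective
    set h := g.map ι with hh
    have hhdeg : h.degree = g.degree := Polynomial.degree_map_eq_of_injective hιinj g
    have hhnd : h.natDegree = n := by
      rw [Polynomial.natDegree, hhdeg]; rfl
    have hh0 : h.degree ≠ 0 := by rw [hhdeg]; exact ne_of_gt hgdeg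
    obtain ⟨x, hx⟩ := IsAlgClosed.exists_root h hh0
    have hxeval : h.eval x = 0 := hx
    -- coefficients of h
    have hcoeff : ∀ i, h.coeff i = (g.coeff i : C) := fun i => Polynomial.coeff_map ι i
    have hcn : ‖h.coeff n‖ = 1 := by rw [hcoeff]; exact hlc1
    have hcle : ∀ i, ‖h.coeff i‖ ≤ 1 := fun i => by rw [hcoeff]; exact (g.coeff i).2
    -- x has norm ≤ 1
    have hxnorm : ‖x‖ ≤ 1 := by
      by_contra hgt
      push_neg at hgt
      have heval : ∑ i ∈ Finset.range (n + 1), h.coeff i * x ^ i = 0 := by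
        rw [← Polynomial.eval_eq_sum_range' (by omega : h.natDegree < n + 1)] at *
        exact hxeval
      rw [Finset.sum_range_succ] at heval
      have htop : h.coeff n * x ^ n = -∑ i ∈ Finset.range n, h.coeff i * x ^ i := by
        linear_combination heval
      have h1 : ‖h.coeff n * x ^ n‖ = ‖x‖ ^ n := by
        rw [norm_mul, hcn, norm_pow, one_mul]
      have h2 : ‖∑ i ∈ Finset.range n, h.coeff i * x ^ i‖ ≤ ‖x‖ ^ (n - 1) := by
        apply IsUltra.norm_sum_le_of_le' (by positivity)
        intro i hi
        rw [Finset.mem_range] at hi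
        rw [norm_mul, norm_pow]
        calc ‖h.coeff i‖ * ‖x‖ ^ i ≤ 1 * ‖x‖ ^ (n - 1) := by
              apply mul_le_mul (hcle i) (pow_le_pow_right₀ (le_of_lt hgt) (by omega)) (by positivity) one_pos.le
          _ = ‖x‖ ^ (n - 1) := one_mul _
      have h3 : ‖x‖ ^ n ≤ ‖x‖ ^ (n - 1) := by
        calc ‖x‖ ^ n = ‖h.coeff n * x ^ n‖ := h1.symm
          _ = ‖-∑ i ∈ Finset.range n, h.coeff i * x ^ i‖ := by rw [htop]
          _ = ‖∑ i ∈ Finset.range n, h.coeff i * x ^ i‖ := norm_neg _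
          _ ≤ ‖x‖ ^ (n - 1) := h2
      have h4 : ‖x‖ ^ (n - 1) < ‖x‖ ^ n := pow_lt_pow_right₀ hgt (by omega)
      linarith
    -- so x is in the ring of integers
    set xO : ringOfIntegersOf C := ⟨x, hxnorm⟩ with hxO
    have hgx : g.eval xO = 0 := by
      apply hιinj
      have : (g.map ι).eval (ι xO) = ι (g.eval xO) := by
        rw [Polynomial.eval_map, Polynomial.eval₂_at_apply]
      rw [map_zero, ← this]
      exact hxeval
    refine ⟨φ xO, ?_⟩
    rw [← hmap, Polynomial.eval_map, Polynomial.eval₂_at_apply, hgx, map_zero]
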